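/- Fix positive integers M, N, K, row supports ρ(k) ⊆ {1,…,M} and column supports γ(k) ⊆ {1,…,N} for k = 1,…,K, a real M×N matrix X, and positive weights λ₁,…,λ_K. Suppose k ≠ k' are module indices with ρ(k') ⊆ ρ(k) and γ(k') ⊆ γ(k), and suppose λ_{k'} ≥ λ_k. If a feasible K-tuple Ŝ = (Ŝ⁽¹⁾,…,Ŝ⁽ᴷ⁾) minimizes the BIDIFAC+ objective F over all feasible K-tuples, then the K-tuple S̃ defined by S̃⁽ᵏ'⁾ = 0, S̃⁽ᵏ⁾ = Ŝ⁽ᵏ⁾ + Ŝ⁽ᵏ'⁾, and S̃⁽ʲ⁾ = Ŝ⁽ʲ⁾ for j ∉ {k, k'}, is feasible and also minimizes F. In particular, there always exists a minimizer of F whose k'-th module is zero, so the condition λ_k > λ_{k'} is necessary to allow the nested module k' to be essentially nonzero. (Proposition 1, condition 1.) -/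

import Mathlib

open Matrix BigOperators

/-- The nuclear norm of a real matrix: the sum of its singular values, i.e. the sum of
the square roots of the (nonnegative real) eigenvalues of `Aᵀ * A` (= `Aᴴ * A` over `ℝ`). -/
noncomputable def nuclearNorm {M N : ℕ} (A : Matrix (Fin M) (Fin N) ℝ) : ℝ :=
  ∑ i, Real.sqrt ((show (Aᵀ * A).IsHermitian by
    rw [← Matrix.conjTranspose_eq_transpose_of_trivial]
    exact Matrix.isHermitian_conjTranspose_mul_self A).eigenvalues i)

/-- Squared Frobenius norm: sum of squared entries. -/
noncomputable def frobSq {M N : ℕ} (A : Matrix (Fin M) (Fin N) ℝ) : ℝ :=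
  ∑ m, ∑ n, (A m n) ^ 2

/-- Feasibility of a `K`-tuple of matrices with respect to row supports `ρ` and
column supports `γ`: module `k` vanishes outside `ρ k × γ k`. -/
def Feasible {M N K : ℕ} (ρ : Fin K → Finset (Fin M)) (γ : Fin K → Finset (Fin N))
    (S : Fin K → Matrix (Fin M) (Fin N) ℝ) : Prop :=
  ∀ k m n, m ∉ ρ k ∨ n ∉ γ k → S k m n = 0

/-- The BIDIFAC+ objective. -/
noncomputable def bidifacObj {M N K : ℕ} (X : Matrix (Fin M) (Fin N) ℝ)
    (lam : Fin K → ℝ) (S : Fin K → Matrix (Fin M) (Fin N) ℝ) : ℝ :=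
  (1 / 2) * frobSq (X - ∑ k, S k) + ∑ k, lam k * nuclearNorm (S k)


lemma Matrix.isHermitian_transpose_mul_self {M N : ℕ} (A : Matrix (Fin M) (Fin N) ℝ) :
    (Aᵀ * A).IsHermitian := by
  rw [← Matrix.conjTranspose_eq_transpose_of_trivial]
  exact Matrix.isHermitian_conjTranspose_mul_self A

open RealInnerProductSpace

namespace BidifacAux

variable {m n : ℕ}

/-- inner products of images of eigenvectors of `Aᴴ A`. -/
lemma inner_T_eig (A : Matrix (Fin m) (Fin n) ℝ) (i j : Fin n) :
    ⟪Matrix.toEuclideanLin A ((Matrix.isHermitian_transpose_mul_self A).eigenvectorBasis i),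
      Matrix.toEuclideanLin A ((Matrix.isHermitian_transpose_mul_self A).eigenvectorBasis j)⟫
      = if i = j then (Matrix.isHermitian_transpose_mul_self A).eigenvalues j else 0 := by
  set hA := Matrix.isHermitian_transpose_mul_self A
  have h1 : Matrix.toEuclideanLin (Aᴴ * A) (hA.eigenvectorBasis j)
      = hA.eigenvalues j • hA.eigenvectorBasis j := by
    apply (WithLp.equiv 2 (Fin n → ℝ)).injective
    simpa [Matrix.ofLp_toEuclideanLin_apply] using hA.mulVec_eigenvectorBasis j
  have h2 : Matrix.toEuclideanLin (Aᴴ) (Matrix.toEuclideanLin A (hA.eigenvectorBasis j))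
      = Matrix.toEuclideanLin (Aᴴ * A) (hA.eigenvectorBasis j) := by
    apply (WithLp.equiv 2 (Fin n → ℝ)).injective
    simp [Matrix.ofLp_toEuclideanLin_apply, Matrix.mulVec_mulVec]
  calc ⟪Matrix.toEuclideanLin A (hA.eigenvectorBasis i),
        Matrix.toEuclideanLin A (hA.eigenvectorBasis j)⟫
      = ⟪hA.eigenvectorBasis i,
          Matrix.toEuclideanLin (Aᴴ) (Matrix.toEuclideanLin A (hA.eigenvectorBasis j))⟫ := by
        rw [Matrix.toEuclideanLin_conjTranspose_eq_adjoint, LinearMap.adjoint_inner_right]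
    _ = ⟪hA.eigenvectorBasis i, hA.eigenvalues j • hA.eigenvectorBasis j⟫ := by rw [h2, h1]
    _ = hA.eigenvalues j * ⟪hA.eigenvectorBasis i, hA.eigenvectorBasis j⟫ :=
        real_inner_smul_right _ _ _
    _ = _ := by
        rcases eq_or_ne i j with rfl | hij
        · simp [orthonormal_iff_ite.mp hA.eigenvectorBasis.orthonormal i i]
        · simp [orthonormal_iff_ite.mp hA.eigenvectorBasis.orthonormal i j, hij]


lemma cs_sqrt {ι : Type*} [Fintype ι] (f g : ι → ℝ) :
    ∑ i, f i * g i ≤ Real.sqrt (∑ i, f i ^ 2) * Real.sqrt (∑ i, g i ^ 2) := by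
  have h := Finset.sum_mul_sq_le_sq_mul_sq Finset.univ f g
  calc ∑ i, f i * g i ≤ |∑ i, f i * g i| := le_abs_self _
    _ = Real.sqrt ((∑ i, f i * g i) ^ 2) := (Real.sqrt_sq_eq_abs _).symm
    _ ≤ Real.sqrt ((∑ i, f i ^ 2) * ∑ i, g i ^ 2) := Real.sqrt_le_sqrt h
    _ = _ := Real.sqrt_mul (Finset.sum_nonneg fun i _ => sq_nonneg _) _

lemma nuclearNorm_nonneg {m n : ℕ} (A : Matrix (Fin m) (Fin n) ℝ) : 0 ≤ nuclearNorm A :=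
  Finset.sum_nonneg fun i _ => Real.sqrt_nonneg _

variable {m n : ℕ}

lemma sum_inner_le_nuclear (A : Matrix (Fin m) (Fin n) ℝ) {ι : Type*} [Fintype ι]
    (p : ι → EuclideanSpace ℝ (Fin m)) (q : ι → EuclideanSpace ℝ (Fin n))
    (hp : Orthonormal ℝ p) (hq : Orthonormal ℝ q) :
    ∑ j, ⟪p j, Matrix.toEuclideanLin A (q j)⟫ ≤ nuclearNorm A := by
  classical
  set hA := Matrix.isHermitian_transpose_mul_self A with hhA
  set v := hA.eigenvectorBasis with hv
  set T := Matrix.toEuclideanLin A with hT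
  have key : ∀ j, ⟪p j, T (q j)⟫ = ∑ i, ⟪v i, q j⟫ * ⟪p j, T (v i)⟫ := by
    intro j
    conv_lhs => rw [← v.sum_repr' (q j)]
    rw [map_sum, inner_sum]
    refine Finset.sum_congr rfl fun i _ => ?_
    rw [_root_.map_smul, real_inner_smul_right]
  calc ∑ j, ⟪p j, T (q j)⟫
      = ∑ i, ∑ j, ⟪v i, q j⟫ * ⟪p j, T (v i)⟫ := by
        simp_rw [key]; exact Finset.sum_comm
    _ ≤ ∑ i, Real.sqrt (∑ j, ⟪v i, q j⟫ ^ 2) * Real.sqrt (∑ j, ⟪p j, T (v i)⟫ ^ 2) :=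
        Finset.sum_le_sum fun i _ => cs_sqrt _ _
    _ ≤ ∑ i, 1 * Real.sqrt (hA.eigenvalues i) := by
        refine Finset.sum_le_sum fun i _ => ?_
        have b1 : ∑ j, ⟪v i, q j⟫ ^ 2 ≤ 1 := by
          have := hq.sum_inner_products_le (s := Finset.univ) (v i)
          simp only [Real.norm_eq_abs, sq_abs] at this
          calc ∑ j, ⟪v i, q j⟫ ^ 2 = ∑ j, ⟪q j, v i⟫ ^ 2 := by
                simp_rw [real_inner_comm]
            _ ≤ ‖v i‖ ^ 2 := this
            _ = 1 := by rw [v.orthonormal.1 i]; norm_num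
        have b2 : ∑ j, ⟪p j, T (v i)⟫ ^ 2 ≤ hA.eigenvalues i := by
          have := hp.sum_inner_products_le (s := Finset.univ) (T (v i))
          simp only [Real.norm_eq_abs, sq_abs] at this
          calc ∑ j, ⟪p j, T (v i)⟫ ^ 2 ≤ ‖T (v i)‖ ^ 2 := this
            _ = ⟪T (v i), T (v i)⟫ := (real_inner_self_eq_norm_sq _).symm
            _ = hA.eigenvalues i := by
                have := inner_T_eig (m := m) (n := n) A i i
                simpa using this
        have := mul_le_mul (Real.sqrt_le_sqrt b1) (Real.sqrt_le_sqrt b2)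
          (Real.sqrt_nonneg _) (by positivity)
        simpa [Real.sqrt_one] using this
    _ = nuclearNorm A := by simp [nuclearNorm]

lemma nuclearNorm_zero : nuclearNorm (0 : Matrix (Fin m) (Fin n) ℝ) = 0 := by
  unfold nuclearNorm
  refine Finset.sum_eq_zero fun i _ => ?_
  have h := inner_T_eig (0 : Matrix (Fin m) (Fin n) ℝ) i i
  have hz : Matrix.toEuclideanLin (0 : Matrix (Fin m) (Fin n) ℝ) = 0 := map_zero _
  rw [hz, if_pos rfl] at h
  simp only [LinearMap.zero_apply, inner_zero_left] at h
  rw [← h, Real.sqrt_zero]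

lemma nuclearNorm_add_le (A B : Matrix (Fin m) (Fin n) ℝ) :
    nuclearNorm (A + B) ≤ nuclearNorm A + nuclearNorm B := by
  classical
  set C := A + B with hCdef
  set hC := Matrix.isHermitian_transpose_mul_self C with hhC
  set v := hC.eigenvectorBasis with hv
  set μ := hC.eigenvalues with hmu
  have hμ : ∀ i, 0 ≤ μ i := fun i => Matrix.eigenvalues_conjTranspose_mul_self_nonneg C i
  set σ := fun i => Real.sqrt (μ i) with hsig
  set T := Matrix.toEuclideanLin C with hT
  have hTT : ∀ i j : Fin n, ⟪T (v i), T (v j)⟫ = if i = j then μ j else 0 :=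
    fun i j => inner_T_eig C i j
  let ι := {i : Fin n // μ i ≠ 0}
  let q : ι → EuclideanSpace ℝ (Fin n) := fun i => v i.1
  let p : ι → EuclideanSpace ℝ (Fin m) := fun i => (σ i.1)⁻¹ • T (v i.1)
  have hσpos : ∀ i : ι, 0 < σ i.1 := fun i => Real.sqrt_pos.2 ((hμ i.1).lt_of_ne (Ne.symm i.2))
  have hσsq : ∀ i : Fin n, σ i ^ 2 = μ i := fun i => Real.sq_sqrt (hμ i)
  have hq : Orthonormal ℝ q := v.orthonormal.comp _ Subtype.val_injective
  have hp : Orthonormal ℝ p := by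
    rw [orthonormal_iff_ite]
    intro i j
    show ⟪(σ i.1)⁻¹ • T (v i.1), (σ j.1)⁻¹ • T (v j.1)⟫ = _
    rw [real_inner_smul_left, real_inner_smul_right, hTT]
    rcases eq_or_ne i j with rfl | hij
    · have h1 : (σ i.1) ≠ 0 := (hσpos i).ne'
      rw [if_pos rfl, if_pos rfl]
      field_simp
      rw [← hσsq i.1]
    · have : (i.1 = j.1) = False := by
        simp only [eq_iff_iff, iff_false]
        exact fun h => hij (Subtype.ext h)
      rw [if_neg (fun h => hij (Subtype.ext h)), if_neg hij]
      ring
  have hval : ∀ i : ι, ⟪p i, T (q i)⟫ = σ i.1 := by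
    intro i
    show ⟪(σ i.1)⁻¹ • T (v i.1), T (v i.1)⟫ = σ i.1
    rw [real_inner_smul_left, hTT, if_pos rfl]
    have h1 : (σ i.1) ≠ 0 := (hσpos i).ne'
    rw [← hσsq i.1]
    field_simp
  have hsum : nuclearNorm C = ∑ i : ι, ⟪p i, T (q i)⟫ := by
    have e1 : nuclearNorm C = ∑ i : Fin n, σ i := rfl
    have e2 : ∑ i : Fin n, σ i = ∑ i ∈ Finset.univ.filter (fun i => μ i ≠ 0), σ i := by
      symm
      apply Finset.sum_filter_of_ne
      intro x _ hx
      intro h0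
      apply hx
      rw [hsig]
      simp [h0]
    have e3 : ∑ i ∈ Finset.univ.filter (fun i => μ i ≠ 0), σ i = ∑ i : ι, σ i.1 :=
      Finset.sum_subtype _ (by simp) _
    simp_rw [hval]
    rw [e1, e2, e3]
  have hsplit : ∑ i : ι, ⟪p i, T (q i)⟫
      = ∑ i : ι, ⟪p i, Matrix.toEuclideanLin A (q i)⟫
        + ∑ i : ι, ⟪p i, Matrix.toEuclideanLin B (q i)⟫ := by
    rw [← Finset.sum_add_distrib]
    refine Finset.sum_congr rfl fun i _ => ?_
    rw [← inner_add_right]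
    congr 1
    rw [hT, hCdef, map_add]
    rfl
  rw [hsum, hsplit]
  exact add_le_add (sum_inner_le_nuclear A p q hp hq) (sum_inner_le_nuclear B p q hp hq)

end BidifacAux


/-- Proposition 1, condition 1: if module `k'` is nested in module `k` and
`λ k ≤ λ k'`, then moving the `k'`-th module into the `k`-th module of any minimizer
yields another feasible minimizer, whose `k'`-th module is zero. -/
theorem bidifac_nested_module_can_be_zeroed
    {M N K : ℕ} (hM : 0 < M) (hN : 0 < N) (hK : 0 < K)
    (ρ : Fin K → Finset (Fin M)) (γ : Fin K → Finset (Fin N))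
    (X : Matrix (Fin M) (Fin N) ℝ) (lam : Fin K → ℝ) (hlam : ∀ k, 0 < lam k)
    (k k' : Fin K) (hkk' : k ≠ k')
    (hρ : ρ k' ⊆ ρ k) (hγ : γ k' ⊆ γ k) (hl : lam k ≤ lam k')
    (Shat : Fin K → Matrix (Fin M) (Fin N) ℝ)
    (hfeas : Feasible ρ γ Shat)
    (hmin : ∀ T, Feasible ρ γ T → bidifacObj X lam Shat ≤ bidifacObj X lam T) :
    Feasible ρ γ (fun j => if j = k' then 0 else if j = k then Shat k + Shat k' else Shat j) ∧
    ∀ T, Feasible ρ γ T →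
      bidifacObj X lam (fun j => if j = k' then 0 else if j = k then Shat k + Shat k' else Shat j)
        ≤ bidifacObj X lam T := by
  classical
  set St := (fun j => if j = k' then 0 else if j = k then Shat k + Shat k' else Shat j)
    with hSt
  have hfeas2 : Feasible ρ γ St := by
    intro j m n hmn
    simp only [hSt]
    by_cases h1 : j = k'
    · simp [h1]
    · by_cases h2 : j = k
      · subst h2
        simp only [if_neg h1, eq_self_iff_true, if_true, Matrix.add_apply]
        have hb : m ∉ ρ k' ∨ n ∉ γ k' := by
          rcases hmn with h | h
          · exact Or.inl fun hm => h (hρ hm)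
          · exact Or.inr fun hn => h (hγ hn)
        rw [hfeas j m n hmn, hfeas k' m n hb, add_zero]
      · simp only [if_neg h1, if_neg h2]
        exact hfeas j m n hmn
  refine ⟨hfeas2, fun T hT => ?_⟩
  refine le_trans ?_ (hmin T hT)
  have hsumeq : ∑ j, St j = ∑ j, Shat j := by
    have e : ∀ j, St j
        = Shat j + (if j = k then Shat k' else 0) - (if j = k' then Shat k' else 0) := by
      intro j
      simp only [hSt]
      by_cases h1 : j = k'
      · subst h1
        rw [if_pos rfl, if_pos rfl, if_neg (fun h => hkk' h.symm)]
        simp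
      · by_cases h2 : j = k
        · subst h2
          rw [if_neg h1, if_pos rfl, if_pos rfl, if_neg h1]
          simp
        · rw [if_neg h1, if_neg h2, if_neg h2, if_neg h1]
          simp
    rw [Finset.sum_congr rfl fun j _ => e j, Finset.sum_sub_distrib, Finset.sum_add_distrib,
      Finset.sum_ite_eq' Finset.univ k fun _ => Shat k',
      Finset.sum_ite_eq' Finset.univ k' fun _ => Shat k']
    simp
  have hStk : St k = Shat k + Shat k' := by
    simp only [hSt]
    simp [hkk']
  have hStk' : St k' = 0 := by simp [hSt]
  have hpen : ∑ j, lam j * nuclearNorm (St j) ≤ ∑ j, lam j * nuclearNorm (Shat j) := by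
    set f := fun j => lam j * nuclearNorm (St j) with hf
    set g := fun j => lam j * nuclearNorm (Shat j) with hg
    have hcore : f k + f k' ≤ g k + g k' := by
      simp only [hf, hg]
      rw [hStk, hStk', BidifacAux.nuclearNorm_zero, mul_zero, add_zero]
      calc lam k * nuclearNorm (Shat k + Shat k')
          ≤ lam k * (nuclearNorm (Shat k) + nuclearNorm (Shat k')) :=
            mul_le_mul_of_nonneg_left (BidifacAux.nuclearNorm_add_le _ _) (hlam k).le
        _ = lam k * nuclearNorm (Shat k) + lam k * nuclearNorm (Shat k') := by ring
        _ ≤ lam k * nuclearNorm (Shat k) + lam k' * nuclearNorm (Shat k') := by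
            have := mul_le_mul_of_nonneg_right hl (BidifacAux.nuclearNorm_nonneg (Shat k'))
            linarith
    have hoff : ∀ j, j ≠ k → j ≠ k' → f j = g j := by
      intro j h2 h1
      simp only [hf, hg, hSt, if_neg h1, if_neg h2]
    have hdiff : ∀ j, g j - f j
        = (if j = k then g k - f k else 0) + (if j = k' then g k' - f k' else 0) := by
      intro j
      by_cases h2 : j = k
      · subst h2
        rw [if_pos rfl, if_neg hkk']
        ring
      · by_cases h1 : j = k'
        · subst h1
          rw [if_neg (fun h => hkk' h.symm), if_pos rfl]
          ring
        · rw [if_neg h2, if_neg h1, hoff j h2 h1]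
          ring
    have hsumd : 0 ≤ ∑ j, (g j - f j) := by
      rw [Finset.sum_congr rfl fun j _ => hdiff j, Finset.sum_add_distrib,
        Finset.sum_ite_eq' Finset.univ k fun _ => g k - f k,
        Finset.sum_ite_eq' Finset.univ k' fun _ => g k' - f k']
      simp only [Finset.mem_univ, if_true]
      linarith
    rw [Finset.sum_sub_distrib] at hsumd
    linarith
  rw [bidifacObj, bidifacObj, hsumeq]
  linarith
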